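/- arXiv:1808.10632 — 2 statements merged into one kernel-verified Lean document; each statement's English description precedes it below -/
import Mathlib

section
/- Let n1, n2, k1, k2 be positive integers, and let W ∈ ℝ^{(n1 n2)×(k1 k2)}. Let R̃(W) ∈ ℝ^{(n1 k1)×(n2 k2)} denote the rearrangement of W (whose row indexed by the block position (i,j) is vec(W_{ij})ᵀ, where W_{ij} ∈ ℝ^{n2×k2} are the blocks of W). If rank(R̃(W)) = l, then there exist matrices L_1,…,L_l ∈ ℝ^{n1×k1} and R_1,…,R_l ∈ ℝ^{n2×k2} with W = Σ_{j=1}^{l} L_j ⊗ R_j; conversely, if W = Σ_{j=1}^{k} L_j ⊗ R_j for some k, then rank(R̃(W)) ≤ k. -/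
open Matrix Kronecker

/-- The rearrangement map `R̃` sending `W ∈ ℝ^{(n1 n2) × (k1 k2)}`, partitioned into blocks
`W_{ij} ∈ ℝ^{n2 × k2}`, to the matrix in `ℝ^{(n1 k1) × (n2 k2)}` whose row indexed by `(i, j)`
is `vec(W_{ij})ᵀ`, i.e. whose `((i,j),(p,q))` entry is `(W_{ij})_{p q} = W_{(i,p),(j,q)}`. -/
def rearrange {n1 n2 k1 k2 : ℕ}
    (W : Matrix (Fin n1 × Fin n2) (Fin k1 × Fin k2) ℝ) :
    Matrix (Fin n1 × Fin k1) (Fin n2 × Fin k2) ℝ :=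
  fun ij pq => W (ij.1, pq.1) (ij.2, pq.2)

/-- A matrix of rank `l` is a sum of `l` outer products. -/
lemma rank_one_decomp {m n : Type*} [Fintype m] [Fintype n] [DecidableEq m] [DecidableEq n]
    (M : Matrix m n ℝ) {l : ℕ} (h : M.rank = l) :
    ∃ (u : Fin l → m → ℝ) (v : Fin l → n → ℝ),
      ∀ p q, M p q = ∑ j : Fin l, u j p * v j q := by
  have hfin : Module.finrank ℝ (LinearMap.range M.mulVecLin) = l := h
  let b := Module.finBasisOfFinrankEq ℝ (LinearMap.range M.mulVecLin) hfin
  have hmem : ∀ q : n, (fun p => M p q) ∈ LinearMap.range M.mulVecLin := by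
    intro q
    refine ⟨Pi.single q 1, ?_⟩
    simp [Matrix.mulVecLin, Matrix.mulVec_single_one]
    rfl
  refine ⟨fun j p => (b j : m → ℝ) p, fun j q => b.repr ⟨_, hmem q⟩ j, fun p q => ?_⟩
  have := b.sum_repr ⟨_, hmem q⟩
  have h2 := congrArg (fun x : LinearMap.range M.mulVecLin => (x : m → ℝ) p) this
  simp only [Submodule.coe_sum, Submodule.coe_smul, Finset.sum_apply, Pi.smul_apply,
    smul_eq_mul] at h2
  rw [← h2]
  exact Finset.sum_congr rfl fun j _ => mul_comm _ _

/-- A sum of `k` outer products has rank at most `k`. -/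
lemma rank_sum_outer_le {m n : Type*} [Fintype m] [Fintype n]
    (M : Matrix m n ℝ) {k : ℕ} (u : Fin k → m → ℝ) (v : Fin k → n → ℝ)
    (h : ∀ p q, M p q = ∑ j : Fin k, u j p * v j q) :
    M.rank ≤ k := by
  have hM : M = (Matrix.of fun p (j : Fin k) => u j p) *
      (Matrix.of fun (j : Fin k) q => v j q) := by
    ext p q
    simp [Matrix.mul_apply, h p q]
  calc M.rank ≤ ((Matrix.of fun p (j : Fin k) => u j p) : Matrix m (Fin k) ℝ).rank := by
        rw [hM]; exact Matrix.rank_mul_le_left _ _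
    _ ≤ Fintype.card (Fin k) := Matrix.rank_le_card_width _
    _ = k := Fintype.card_fin k

/-- if `rank(R̃(W)) = l` then `W` is a sum of `l` Kronecker products
`L_j ⊗ R_j`; conversely, if `W = Σ_{j=1}^k L_j ⊗ R_j` then `rank(R̃(W)) ≤ k`. -/
theorem kronecker_rank_decomposition
    (n1 n2 k1 k2 : ℕ) (hn1 : 0 < n1) (hn2 : 0 < n2) (hk1 : 0 < k1) (hk2 : 0 < k2)
    (W : Matrix (Fin n1 × Fin n2) (Fin k1 × Fin k2) ℝ) :
    (∀ l : ℕ, (rearrange W).rank = l →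
      ∃ (L : Fin l → Matrix (Fin n1) (Fin k1) ℝ)
        (R : Fin l → Matrix (Fin n2) (Fin k2) ℝ),
        W = ∑ j : Fin l, (L j) ⊗ₖ (R j)) ∧
    (∀ (k : ℕ) (L : Fin k → Matrix (Fin n1) (Fin k1) ℝ)
        (R : Fin k → Matrix (Fin n2) (Fin k2) ℝ),
        W = ∑ j : Fin k, (L j) ⊗ₖ (R j) → (rearrange W).rank ≤ k) := by
  constructor
  · intro l hl
    obtain ⟨u, v, huv⟩ := rank_one_decomp (rearrange W) hl
    refine ⟨fun j => Matrix.of fun i j' => u j (i, j'),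
            fun j => Matrix.of fun p q => v j (p, q), ?_⟩
    ext ⟨i, p⟩ ⟨j', q⟩
    have := huv (i, j') (p, q)
    simp only [Finset.sum_apply, Matrix.sum_apply, Matrix.kroneckerMap_apply, Matrix.of_apply]
    exact this
  · intro k L R hW
    refine rank_sum_outer_le (rearrange W)
      (fun j ij => L j ij.1 ij.2) (fun j pq => R j pq.1 pq.2) ?_
    intro ⟨i, j'⟩ ⟨p, q⟩
    show W (i, p) (j', q) = _
    rw [hW]
    simp only [Matrix.sum_apply, Matrix.kroneckerMap_apply]
end

section
/- Let A_1,…,A_N ∈ ℝ^{n1×n2}. Then the infimum over all L ∈ ℝ^{n1×k1} with LᵀL = I_{k1}, all R ∈ ℝ^{n2×k2} with RᵀR = I_{k2}, and all D_1,…,D_N ∈ ℝ^{k1×k2} of Σ_{i=1}^{N} ‖A_i − L D_i Rᵀ‖_F² equals Σ_{i=1}^{N} ‖A_i‖_F² minus the supremum over orthonormal-column L, R of Σ_{i=1}^{N} ‖Lᵀ A_i R‖_F²; moreover, for any fixed orthonormal-column L, R, the optimal D_i in the minimization are given by D_i = Lᵀ A_i R. -/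
open Matrix

/-- The squared Frobenius norm of a matrix. -/
def frobSq {m n : ℕ} (M : Matrix (Fin m) (Fin n) ℝ) : ℝ :=
  ∑ i, ∑ j, (M i j) ^ 2


lemma frobSq_eq_trace {m n : ℕ} (M : Matrix (Fin m) (Fin n) ℝ) :
    frobSq M = (Mᵀ * M).trace := by
  simp only [frobSq, Matrix.trace, Matrix.diag_apply, Matrix.mul_apply, Matrix.transpose_apply, sq]
  rw [Finset.sum_comm]

lemma frobSq_nonneg {m n : ℕ} (M : Matrix (Fin m) (Fin n) ℝ) : 0 ≤ frobSq M :=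
  Finset.sum_nonneg fun _ _ => Finset.sum_nonneg fun _ _ => sq_nonneg _

lemma frobSq_sub {m n : ℕ} (M P : Matrix (Fin m) (Fin n) ℝ) :
    frobSq (M - P) = frobSq M - 2 * (Mᵀ * P).trace + frobSq P := by
  simp only [frobSq_eq_trace, Matrix.transpose_sub, Matrix.sub_mul, Matrix.mul_sub,
    Matrix.trace_sub]
  have h : (Pᵀ * M).trace = (Mᵀ * P).trace := by
    rw [← Matrix.trace_transpose (Pᵀ * M), Matrix.transpose_mul, Matrix.transpose_transpose]
  rw [h]; ring

lemma trace_inner_eq {n1 n2 k1 k2 : ℕ} (L : Matrix (Fin n1) (Fin k1) ℝ)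
    (R : Matrix (Fin n2) (Fin k2) ℝ) (A : Matrix (Fin n1) (Fin n2) ℝ)
    (D : Matrix (Fin k1) (Fin k2) ℝ) :
    (Aᵀ * (L * D * Rᵀ)).trace = ((Lᵀ * A * R)ᵀ * D).trace := by
  have e1 : Aᵀ * (L * D * Rᵀ) = (Aᵀ * L * D) * Rᵀ := by
    simp [Matrix.mul_assoc]
  have e2 : (Lᵀ * A * R)ᵀ * D = Rᵀ * (Aᵀ * L * D) := by
    simp [Matrix.transpose_mul, Matrix.mul_assoc]
  rw [e1, e2, Matrix.trace_mul_comm]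

lemma frobSq_sandwich {n1 n2 k1 k2 : ℕ} {L : Matrix (Fin n1) (Fin k1) ℝ}
    {R : Matrix (Fin n2) (Fin k2) ℝ} (hL : Lᵀ * L = 1) (hR : Rᵀ * R = 1)
    (D : Matrix (Fin k1) (Fin k2) ℝ) :
    frobSq (L * D * Rᵀ) = frobSq D := by
  rw [frobSq_eq_trace, frobSq_eq_trace]
  have e : (L * D * Rᵀ)ᵀ * (L * D * Rᵀ) = R * ((Dᵀ * D) * Rᵀ) := by
    calc (L * D * Rᵀ)ᵀ * (L * D * Rᵀ) = R * (Dᵀ * ((Lᵀ * L) * (D * Rᵀ))) := by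
          simp [Matrix.transpose_mul, Matrix.mul_assoc]
      _ = R * ((Dᵀ * D) * Rᵀ) := by rw [hL]; simp [Matrix.mul_assoc]
  rw [e, Matrix.trace_mul_comm, Matrix.mul_assoc, hR, Matrix.mul_one]

lemma key {n1 n2 k1 k2 : ℕ} {L : Matrix (Fin n1) (Fin k1) ℝ}
    {R : Matrix (Fin n2) (Fin k2) ℝ} (hL : Lᵀ * L = 1) (hR : Rᵀ * R = 1)
    (A : Matrix (Fin n1) (Fin n2) ℝ) (D : Matrix (Fin k1) (Fin k2) ℝ) :
    frobSq (A - L * D * Rᵀ) = frobSq A - frobSq (Lᵀ * A * R) + frobSq (D - Lᵀ * A * R) := by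
  rw [frobSq_sub, frobSq_sub, frobSq_sandwich hL hR, trace_inner_eq]
  have h3 : (Dᵀ * (Lᵀ * A * R)).trace = ((Lᵀ * A * R)ᵀ * D).trace := by
    rw [← Matrix.trace_transpose (Dᵀ * (Lᵀ * A * R)), Matrix.transpose_mul,
      Matrix.transpose_transpose]
  rw [h3]; ring

lemma exists_orthonormal {k n : ℕ} (h : k ≤ n) :
    ∃ W : Matrix (Fin n) (Fin k) ℝ, Wᵀ * W = 1 := by
  refine ⟨Matrix.of fun i j => if (Fin.castLE h j : Fin n) = i then 1 else 0, ?_⟩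
  ext a b
  simp only [Matrix.mul_apply, Matrix.transpose_apply, Matrix.of_apply, Matrix.one_apply, ite_mul, one_mul,
    zero_mul]
  rw [Finset.sum_ite_eq]
  simp [Fin.castLE_injective h |>.eq_iff, eq_comm]

/-- the GLRAM minimization `inf Σ_i ‖A_i − L D_i Rᵀ‖_F²` (over orthonormal-column
`L`, `R` and arbitrary `D_i`) equals `Σ_i ‖A_i‖_F²` minus the supremum of `Σ_i ‖Lᵀ A_i R‖_F²`
over orthonormal-column `L`, `R`; moreover for fixed orthonormal-column `L`, `R` the optimal
`D_i` are `D_i = Lᵀ A_i R`. -/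
theorem glram_min_eq_max
    (n1 n2 k1 k2 N : ℕ) (hk1 : k1 ≤ n1) (hk2 : k2 ≤ n2)
    (A : Fin N → Matrix (Fin n1) (Fin n2) ℝ) :
    sInf {v : ℝ | ∃ (L : Matrix (Fin n1) (Fin k1) ℝ) (R : Matrix (Fin n2) (Fin k2) ℝ)
        (D : Fin N → Matrix (Fin k1) (Fin k2) ℝ), Lᵀ * L = 1 ∧ Rᵀ * R = 1 ∧
        v = ∑ i, frobSq (A i - L * D i * Rᵀ)} =
      (∑ i, frobSq (A i)) -
        sSup {v : ℝ | ∃ (L : Matrix (Fin n1) (Fin k1) ℝ) (R : Matrix (Fin n2) (Fin k2) ℝ),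
          Lᵀ * L = 1 ∧ Rᵀ * R = 1 ∧ v = ∑ i, frobSq (Lᵀ * A i * R)} ∧
    ∀ (L : Matrix (Fin n1) (Fin k1) ℝ) (R : Matrix (Fin n2) (Fin k2) ℝ),
      Lᵀ * L = 1 → Rᵀ * R = 1 →
      ∀ D : Fin N → Matrix (Fin k1) (Fin k2) ℝ,
        ∑ i, frobSq (A i - L * (Lᵀ * A i * R) * Rᵀ) ≤
          ∑ i, frobSq (A i - L * D i * Rᵀ) := by
  set C := ∑ i, frobSq (A i) with hC
  set T := {v : ℝ | ∃ (L : Matrix (Fin n1) (Fin k1) ℝ) (R : Matrix (Fin n2) (Fin k2) ℝ)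
        (D : Fin N → Matrix (Fin k1) (Fin k2) ℝ), Lᵀ * L = 1 ∧ Rᵀ * R = 1 ∧
        v = ∑ i, frobSq (A i - L * D i * Rᵀ)} with hT
  set S := {v : ℝ | ∃ (L : Matrix (Fin n1) (Fin k1) ℝ) (R : Matrix (Fin n2) (Fin k2) ℝ),
          Lᵀ * L = 1 ∧ Rᵀ * R = 1 ∧ v = ∑ i, frobSq (Lᵀ * A i * R)} with hS
  -- summed key identity
  have hkey : ∀ (L : Matrix (Fin n1) (Fin k1) ℝ) (R : Matrix (Fin n2) (Fin k2) ℝ),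
      Lᵀ * L = 1 → Rᵀ * R = 1 → ∀ D : Fin N → Matrix (Fin k1) (Fin k2) ℝ,
      ∑ i, frobSq (A i - L * D i * Rᵀ) =
        C - (∑ i, frobSq (Lᵀ * A i * R)) + ∑ i, frobSq (D i - Lᵀ * A i * R) := by
    intro L R hL hR D
    rw [Finset.sum_congr rfl (fun i _ => key hL hR (A i) (D i)), Finset.sum_add_distrib,
      Finset.sum_sub_distrib]
  have hzero : ∀ (L : Matrix (Fin n1) (Fin k1) ℝ) (R : Matrix (Fin n2) (Fin k2) ℝ),
      ∑ i, frobSq ((Lᵀ * A i * R) - Lᵀ * A i * R) = 0 := by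
    intro L R; simp [frobSq]
  have hsum_nonneg : ∀ {a b : ℕ} (B : Fin N → Matrix (Fin a) (Fin b) ℝ),
      (0:ℝ) ≤ ∑ i, frobSq (B i) := fun B => Finset.sum_nonneg fun i _ => frobSq_nonneg _
  have part2 : ∀ (L : Matrix (Fin n1) (Fin k1) ℝ) (R : Matrix (Fin n2) (Fin k2) ℝ),
      Lᵀ * L = 1 → Rᵀ * R = 1 →
      ∀ D : Fin N → Matrix (Fin k1) (Fin k2) ℝ,
        ∑ i, frobSq (A i - L * (Lᵀ * A i * R) * Rᵀ) ≤
          ∑ i, frobSq (A i - L * D i * Rᵀ) := by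
    intro L R hL hR D
    rw [hkey L R hL hR (fun i => Lᵀ * A i * R), hkey L R hL hR D, hzero L R]
    have := hsum_nonneg (fun i => D i - Lᵀ * A i * R)
    linarith
  refine ⟨?_, part2⟩
  obtain ⟨L₀, hL₀⟩ := exists_orthonormal hk1
  obtain ⟨R₀, hR₀⟩ := exists_orthonormal hk2
  have hSne : S.Nonempty := ⟨_, L₀, R₀, hL₀, hR₀, rfl⟩
  have hSbdd : BddAbove S := by
    refine ⟨C, fun v hv => ?_⟩
    obtain ⟨L, R, hL, hR, rfl⟩ := hv
    have h := hkey L R hL hR (fun i => Lᵀ * A i * R)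
    rw [hzero L R] at h
    have h2 := hsum_nonneg (fun i => A i - L * (Lᵀ * A i * R) * Rᵀ)
    rw [h] at h2
    linarith
  have hTlb : ∀ v ∈ T, C - sSup S ≤ v := by
    intro v hv
    obtain ⟨L, R, D, hL, hR, rfl⟩ := hv
    rw [hkey L R hL hR D]
    have h1 : (∑ i, frobSq (Lᵀ * A i * R)) ≤ sSup S :=
      le_csSup hSbdd ⟨L, R, hL, hR, rfl⟩
    have h2 := hsum_nonneg (fun i => D i - Lᵀ * A i * R)
    linarith
  have hTbdd : BddBelow T := ⟨C - sSup S, hTlb⟩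
  have hTne : T.Nonempty := ⟨_, L₀, R₀, fun _ => 0, hL₀, hR₀, rfl⟩
  refine le_antisymm ?_ (le_csInf hTne hTlb)
  have h1 : ∀ w ∈ S, sInf T ≤ C - w := by
    intro w hw
    obtain ⟨L, R, hL, hR, rfl⟩ := hw
    have hmem : C - (∑ i, frobSq (Lᵀ * A i * R)) ∈ T := by
      refine ⟨L, R, fun i => Lᵀ * A i * R, hL, hR, ?_⟩
      rw [hkey L R hL hR (fun i => Lᵀ * A i * R), hzero L R]; ring
    exact csInf_le hTbdd hmem
  have h2 : sSup S ≤ C - sInf T :=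
    csSup_le hSne (fun w hw => by have := h1 w hw; linarith)
  linarith
end
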